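/- arXiv:2104.03568 — 3 statements merged into one kernel-verified Lean document; each statement's English description precedes it below -/
import Mathlib

section
/- Let $P$ be a bistochastic matrix on a finite state space $\Omega$ with $|\Omega| = n$, let $x \in \Omega$, and let $t \ge 1$. For a permutation $\pi$ of $\Omega$, let $\mu_{\pi}$ denote the law on $(\Omega\times\Omega)^t$ of the trajectory $((X_0, Y_0), (X_1, Y_1), \ldots, (X_{t-1}, Y_{t-1}))$ where $X_0 = x$, and for each $k \ge 0$, $Y_k$ is drawn from $P(X_k, \cdot)$ and $X_{k+1} = \pi(Y_k)$; let $\mu$ be the annealed law, i.e. the average of $\mu_{\pi}$ over a uniformly random permutation $\pi$. Let $\nu$ be the law on $(\Omega\times\Omega)^t$ of $((X_0^\star, Y_0^\star), \ldots, (X_{t-1}^\star, Y_{t-1}^\star))$ where $X_0^\star = x$, each $Y_k^\star$ is drawn from $P(X_k^\star, \cdot)$, and each $X_{k+1}^\star$ is uniform on $\Omega$ independently of everything else. Then the total-variation distance between $\mu$ and $\nu$ is at most $2t^2/n$. -/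
open Finset Filter

noncomputable section

/-- A bistochastic matrix: nonnegative entries, all rows and columns sum to 1. -/
def Bistochastic {n : ℕ} (P : Matrix (Fin n) (Fin n) ℝ) : Prop :=
  (∀ x y, 0 ≤ P x y) ∧ (∀ x, ∑ y, P x y = 1) ∧ (∀ y, ∑ x, P x y = 1)

/-- The permutation matrix of a permutation: `Π x y = 1` iff `y = π x`. -/
def permMatrix {n : ℕ} (π : Equiv.Perm (Fin n)) : Matrix (Fin n) (Fin n) ℝ :=
  fun x y => if y = π x then 1 else 0

/-- Entropy rate of a bistochastic matrix. -/
def entRate {n : ℕ} (P : Matrix (Fin n) (Fin n) ℝ) : ℝ :=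
  (1 / n) * ∑ x, ∑ y, if 0 < P x y then P x y * Real.log (1 / P x y) else 0

/-- Minimal positive entry. -/
def minPosEntry {n : ℕ} (P : Matrix (Fin n) (Fin n) ℝ) : ℝ :=
  sInf {r : ℝ | 0 < r ∧ ∃ x y, P x y = r}

/-- Total variation distance to uniform at time `t` from `x`. -/
def tvFrom {n : ℕ} (Q : Matrix (Fin n) (Fin n) ℝ) (t : ℕ) (x : Fin n) : ℝ :=
  ∑ y, max ((1 : ℝ) / n - (Q ^ t) x y) 0

/-- Worst-case total variation distance at time `t`. -/
def worstTV {n : ℕ} (Q : Matrix (Fin n) (Fin n) ℝ) (t : ℕ) : ℝ :=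
  ⨆ x, tvFrom Q t x

/-- Mixing time. -/
def mixingTime {n : ℕ} (Q : Matrix (Fin n) (Fin n) ℝ) (ε : ℝ) : ℕ :=
  sInf {t : ℕ | worstTV Q t ≤ ε}

open Classical in
/-- Probability of an event under the uniform distribution on permutations. -/
def probPerm {n : ℕ} (E : Equiv.Perm (Fin n) → Prop) : ℝ :=
  (Finset.univ.filter E).card / (Fintype.card (Equiv.Perm (Fin n)))


open Classical in
/-- Law of the trajectory `((X₀,Y₀),…,(X_{t-1},Y_{t-1}))` for a fixed permutation `π`:
`X₀ = x`, `Yₖ ~ P(Xₖ,·)`, `X_{k+1} = π(Yₖ)`. -/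
def quenchedLaw {n : ℕ} (t : ℕ) (ht : 1 ≤ t) (P : Matrix (Fin n) (Fin n) ℝ) (x : Fin n)
    (π : Equiv.Perm (Fin n)) (w : Fin t → Fin n × Fin n) : ℝ :=
  if (w ⟨0, ht⟩).1 = x ∧
      ∀ (k : ℕ) (h : k + 1 < t), (w ⟨k + 1, h⟩).1 = π (w ⟨k, Nat.lt_of_succ_lt h⟩).2
  then ∏ k, P (w k).1 (w k).2 else 0

/-- The annealed law: average of the quenched laws over a uniformly random permutation. -/
def annealedLaw {n : ℕ} (t : ℕ) (ht : 1 ≤ t) (P : Matrix (Fin n) (Fin n) ℝ) (x : Fin n)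
    (w : Fin t → Fin n × Fin n) : ℝ :=
  (∑ π : Equiv.Perm (Fin n), quenchedLaw t ht P x π w) / (Fintype.card (Equiv.Perm (Fin n)))

open Classical in
/-- Law of `((X₀⋆,Y₀⋆),…,(X⋆_{t-1},Y⋆_{t-1}))`: `X₀⋆ = x`, `Yₖ⋆ ~ P(Xₖ⋆,·)`, and each
`X⋆_{k+1}` uniform on `Ω`, independently of everything else. -/
def starLaw {n : ℕ} (t : ℕ) (ht : 1 ≤ t) (P : Matrix (Fin n) (Fin n) ℝ) (x : Fin n)
    (w : Fin t → Fin n × Fin n) : ℝ :=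
  if (w ⟨0, ht⟩).1 = x then (∏ k, P (w k).1 (w k).2) * ((1 : ℝ) / n) ^ (t - 1) else 0


section AuxiliaryLemmas

variable {α : Type*} [Fintype α] [DecidableEq α]

lemma sum_pi_prod {t : ℕ} (F : Fin t → α → ℝ) :
    ∑ u : Fin t → α, ∏ m, F m (u m) = ∏ m, ∑ a, F m a :=
  (Fintype.prod_sum F).symm

lemma sum_pi_two {t : ℕ} (j k : Fin t) (hjk : j ≠ k) (F : Fin t → α → ℝ) (R : α → α → ℝ) :
    ∑ u : Fin t → α, R (u j) (u k) * ∏ m, F m (u m)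
      = (∑ a, ∑ b, R a b * (F j a * F k b)) * ∏ m ∈ (univ.erase j).erase k, ∑ a, F m a := by
  have key : ∀ a b : α,
      (∑ u : Fin t → α, (if u j = a then (1:ℝ) else 0) * ((if u k = b then (1:ℝ) else 0)
        * ∏ m, F m (u m)))
      = F j a * (F k b * ∏ m ∈ (univ.erase j).erase k, ∑ c, F m c) := by
    intro a b
    have h1 : ∀ u : Fin t → α,
        (if u j = a then (1:ℝ) else 0) * ((if u k = b then (1:ℝ) else 0) * ∏ m, F m (u m))
        = ∏ m, ((if m = j then (if u m = a then (1:ℝ) else 0) else 1)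
            * ((if m = k then (if u m = b then (1:ℝ) else 0) else 1) * F m (u m))) := by
      intro u
      rw [Finset.prod_mul_distrib, Finset.prod_mul_distrib]
      congr 1
      · simp
      congr 1
      · simp
    simp_rw [h1]
    rw [sum_pi_prod (fun m c => (if m = j then (if c = a then (1:ℝ) else 0) else 1)
        * ((if m = k then (if c = b then (1:ℝ) else 0) else 1) * F m c))]
    have hk : k ∈ univ.erase j := by simp [hjk.symm]
    rw [← Finset.mul_prod_erase univ _ (mem_univ j), ← Finset.mul_prod_erase _ _ hk]
    congr 1
    · simp [hjk]
    congr 1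
    · simp [hjk.symm]
    · apply Finset.prod_congr rfl
      intro m hm
      simp only [mem_erase] at hm
      simp [hm.1, hm.2.1]
  have h2 : ∀ u : Fin t → α, R (u j) (u k) * ∏ m, F m (u m)
      = ∑ a, ∑ b, (if u j = a then (1:ℝ) else 0) * ((if u k = b then (1:ℝ) else 0)
          * (R a b * ∏ m, F m (u m))) := by
    intro u
    simp [ite_mul, Finset.sum_ite_eq', mul_assoc]
  simp_rw [h2]
  rw [Finset.sum_comm, Finset.sum_mul]
  refine Finset.sum_congr rfl fun a _ => ?_
  rw [Finset.sum_comm, Finset.sum_mul]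
  refine Finset.sum_congr rfl fun b _ => ?_
  have : ∀ u : Fin t → α, (if u j = a then (1:ℝ) else 0) * ((if u k = b then (1:ℝ) else 0)
          * (R a b * ∏ m, F m (u m)))
      = R a b * ((if u j = a then (1:ℝ) else 0) * ((if u k = b then (1:ℝ) else 0)
          * ∏ m, F m (u m))) := by intro u; ring
  simp_rw [this, ← Finset.mul_sum]
  rw [key]
  ring

lemma chain_sum {n : ℕ} (P : Matrix (Fin n) (Fin n) ℝ) (hrow : ∀ a, ∑ b, P a b = 1)
    (u : Fin n → Fin n) :
    ∀ (s : ℕ) (x : Fin n), ∑ Y : Fin (s+1) → Fin n,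
      (P x (Y 0) * ∏ j : Fin s, P (u (Y j.castSucc)) (Y j.succ)) = 1 := by
  intro s
  induction s with
  | zero =>
    intro x
    rw [← Equiv.sum_comp (Equiv.funUnique (Fin 1) (Fin n)).symm]
    simpa using hrow x
  | succ s ih =>
    intro x
    rw [← Equiv.sum_comp (Fin.consEquiv (fun _ : Fin (s+2) => Fin n)), Fintype.sum_prod_type]
    have h2 : ∀ (y : Fin n) (Y' : Fin (s+1) → Fin n),
        P x ((Fin.consEquiv (fun _ : Fin (s+2) => Fin n)) (y, Y') 0) *
          ∏ j : Fin (s+1), P (u ((Fin.consEquiv (fun _ : Fin (s+2) => Fin n)) (y, Y') j.castSucc))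
            ((Fin.consEquiv (fun _ : Fin (s+2) => Fin n)) (y, Y') j.succ)
        = P x y * (P (u y) (Y' 0) * ∏ j : Fin s, P (u (Y' j.castSucc)) (Y' j.succ)) := by
      intro y Y'
      have hc : (Fin.consEquiv (fun _ : Fin (s+2) => Fin n)) (y, Y') = Fin.cons y Y' := rfl
      rw [hc]
      rw [Fin.prod_univ_succ]
      simp_rw [← Fin.succ_castSucc, Fin.cons_succ]
      simp
    simp_rw [h2, ← Finset.mul_sum, ih, mul_one]
    exact hrow x

lemma perm_extend_card {n m : ℕ} (f g : Fin m → Fin n) (hf : Function.Injective f)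
    (hg : Function.Injective g) :
    Nat.factorial (n - m) ≤
      (univ.filter (fun π : Equiv.Perm (Fin n) => ∀ j, π (f j) = g j)).card := by
  classical
  have hrf : Fintype.card (Set.range f) = m := by
    rw [← Fintype.card_congr (Equiv.ofInjective f hf), Fintype.card_fin]
  have hrg : Fintype.card (Set.range g) = m := by
    rw [← Fintype.card_congr (Equiv.ofInjective g hg), Fintype.card_fin]
  have hcardf : Fintype.card {a : Fin n // a ∉ Set.range f} = n - m := by
    rw [Fintype.card_subtype_compl, Fintype.card_fin, hrf]
  have hcardg : Fintype.card {a : Fin n // a ∉ Set.range g} = n - m := by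
    rw [Fintype.card_subtype_compl, Fintype.card_fin, hrg]
  obtain ⟨cc⟩ : Nonempty ({a : Fin n // a ∉ Set.range f} ≃ {a : Fin n // a ∉ Set.range g}) :=
    ⟨Fintype.equivOfCardEq (by rw [hcardf, hcardg])⟩
  obtain ⟨e, he⟩ : ∃ e : Set.range f ≃ Set.range g, ∀ j,
      ((e ⟨f j, Set.mem_range_self j⟩ : Fin n) = g j) := by
    refine ⟨(Equiv.ofInjective f hf).symm.trans (Equiv.ofInjective g hg), fun j => ?_⟩
    have h1 : (⟨f j, Set.mem_range_self j⟩ : Set.range f) = Equiv.ofInjective f hf j :=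
      Subtype.ext (by simp)
    rw [h1, Equiv.trans_apply, Equiv.symm_apply_apply]
    simp
  set Φ : Equiv.Perm {a : Fin n // a ∉ Set.range f} → Equiv.Perm (Fin n) := fun σ =>
    ((Equiv.sumCompl (· ∈ Set.range f)).symm.trans
      ((e.sumCongr (σ.trans cc)).trans (Equiv.sumCompl (· ∈ Set.range g)))) with hΦ
  have hval : ∀ σ (a : Fin n) (ha : a ∉ Set.range f),
      Φ σ a = (cc (σ ⟨a, ha⟩) : Fin n) := by
    intro σ a ha
    simp [hΦ, Equiv.sumCompl_symm_apply_of_neg ha]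
  have hmem : ∀ σ (j : Fin m), Φ σ (f j) = g j := by
    intro σ j
    have h0 : (Equiv.sumCompl (· ∈ Set.range f)).symm (f j)
        = Sum.inl ⟨f j, Set.mem_range_self j⟩ :=
      Equiv.sumCompl_symm_apply_of_pos (Set.mem_range_self j)
    simp only [hΦ, Equiv.trans_apply, h0, Equiv.sumCongr_apply, Sum.map_inl,
      Equiv.sumCompl_apply_inl]
    exact he j
  have hinj : Function.Injective Φ := by
    intro σ σ' hss
    refine Equiv.ext fun a => ?_
    have : Φ σ a.1 = Φ σ' a.1 := by rw [hss]
    rw [hval σ a.1 a.2, hval σ' a.1 a.2] at this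
    have h2 := cc.injective (Subtype.ext this)
    simpa using h2
  calc Nat.factorial (n - m) = Fintype.card (Equiv.Perm {a : Fin n // a ∉ Set.range f}) := by
        rw [Fintype.card_perm, hcardf]
    _ = (univ : Finset (Equiv.Perm {a : Fin n // a ∉ Set.range f})).card := by
        rw [Finset.card_univ]
    _ ≤ _ := by
        apply Finset.card_le_card_of_injOn Φ
        · intro σ _
          simp only [mem_coe, mem_filter, mem_univ, true_and]
          exact hmem σ
        · exact hinj.injOn

open Classical in
lemma quenched_eq {n s : ℕ} (ht : 1 ≤ s + 1) (P : Matrix (Fin n) (Fin n) ℝ) (x : Fin n)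
    (π : Equiv.Perm (Fin n)) (w : Fin (s+1) → Fin n × Fin n) :
    quenchedLaw (s+1) ht P x π w =
      ∏ k, ((if (w k).1 = Fin.cases x (fun j => π ((w j.castSucc).2)) k then (1:ℝ) else 0)
        * P (w k).1 (w k).2) := by
  rw [Finset.prod_mul_distrib, Finset.prod_boole, quenchedLaw]
  have hiff : ((w ⟨0, ht⟩).1 = x ∧
      ∀ (k : ℕ) (h : k + 1 < s+1), (w ⟨k + 1, h⟩).1 = π (w ⟨k, Nat.lt_of_succ_lt h⟩).2)
      ↔ ∀ k : Fin (s+1), (w k).1 = Fin.cases x (fun j => π ((w j.castSucc).2)) k := by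
    constructor
    · rintro ⟨h0, hsucc⟩ k
      induction k using Fin.cases with
      | zero => simpa using h0
      | succ j =>
        rw [Fin.cases_succ]
        exact hsucc j (Nat.succ_lt_succ j.isLt)
    · intro h
      constructor
      · simpa using h 0
      · intro k hk
        have h2 := h ⟨k+1, hk⟩
        have h3 : (⟨k+1, hk⟩ : Fin (s+1)) = Fin.succ ⟨k, by omega⟩ := rfl
        rw [h3, Fin.cases_succ] at h2
        exact h2
    
  rw [if_congr hiff rfl rfl, ite_mul, one_mul, zero_mul]
  simp

open Classical in
lemma quenched_sum {n s : ℕ} (ht : 1 ≤ s + 1) (P : Matrix (Fin n) (Fin n) ℝ)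
    (hrow : ∀ a, ∑ b, P a b = 1) (x : Fin n) (π : Equiv.Perm (Fin n)) :
    ∑ w : Fin (s+1) → Fin n × Fin n, quenchedLaw (s+1) ht P x π w = 1 := by
  simp_rw [quenched_eq ht P x π]
  rw [← Equiv.sum_comp (Equiv.arrowProdEquivProdArrow (Fin (s+1)) (fun _ => Fin n) (fun _ => Fin n)).symm,
    Fintype.sum_prod_type_right]
  have hXY : ∀ (X Y : Fin (s+1) → Fin n) (i : Fin (s+1)),
      ((Equiv.arrowProdEquivProdArrow (Fin (s+1)) (fun _ => Fin n) (fun _ => Fin n)).symm (X, Y)) i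
        = (X i, Y i) := fun _ _ _ => rfl
  have hinner : ∀ Y : Fin (s+1) → Fin n,
      (∑ X : Fin (s+1) → Fin n, ∏ k,
        ((if ((Equiv.arrowProdEquivProdArrow (Fin (s+1)) (fun _ => Fin n) (fun _ => Fin n)).symm (X, Y) k).1
            = Fin.cases x (fun j => π (((Equiv.arrowProdEquivProdArrow (Fin (s+1))
              (fun _ => Fin n) (fun _ => Fin n)).symm (X, Y) j.castSucc).2)) k then (1:ℝ) else 0)
          * P ((Equiv.arrowProdEquivProdArrow (Fin (s+1)) (fun _ => Fin n) (fun _ => Fin n)).symm (X, Y) k).1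
            ((Equiv.arrowProdEquivProdArrow (Fin (s+1)) (fun _ => Fin n) (fun _ => Fin n)).symm (X, Y) k).2))
      = P x (Y 0) * ∏ j : Fin s, P (π (Y j.castSucc)) (Y j.succ) := by
    intro Y
    simp_rw [hXY]
    rw [sum_pi_prod (fun k a =>
      (if a = Fin.cases x (fun j => π (Y j.castSucc)) k then (1:ℝ) else 0) * P a (Y k))]
    have hcol : ∀ k : Fin (s+1),
        (∑ a, (if a = Fin.cases x (fun j => π (Y j.castSucc)) k then (1:ℝ) else 0) * P a (Y k))
        = P (Fin.cases x (fun j => π (Y j.castSucc)) k) (Y k) := by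
      intro k
      simp [ite_mul, Finset.sum_ite_eq']
    simp_rw [hcol]
    rw [Fin.prod_univ_succ]
    simp
  simp_rw [hinner]
  exact chain_sum P hrow π s x

open Classical in
def Fstar {n : ℕ} (s : ℕ) (P : Matrix (Fin n) (Fin n) ℝ) (x : Fin n)
    (k : Fin (s+1)) (z : Fin n × Fin n) : ℝ :=
  (if k = 0 then (if z.1 = x then (1:ℝ) else 0) else 1) * P z.1 z.2

variable {n s : ℕ} {P : Matrix (Fin n) (Fin n) ℝ} {x : Fin n}

open Classical in
lemma star_eq (ht : 1 ≤ s+1) (w : Fin (s+1) → Fin n × Fin n) :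
    starLaw (s+1) ht P x w = (∏ k, Fstar s P x k (w k)) * ((1:ℝ)/n) ^ s := by
  rw [starLaw]
  unfold Fstar
  rw [Finset.prod_mul_distrib, Finset.prod_ite_eq' univ (0 : Fin (s+1))
    (fun k => if (w k).1 = x then (1:ℝ) else 0)]
  have h0 : (⟨0, ht⟩ : Fin (s+1)) = 0 := rfl
  rw [h0]
  by_cases hx : (w (0 : Fin (s+1))).1 = x <;> simp [hx]

lemma Fstar_nonneg (hP : ∀ a b, 0 ≤ P a b) (k : Fin (s+1)) (z : Fin n × Fin n) :
    0 ≤ Fstar s P x k z := by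
  unfold Fstar
  have := hP z.1 z.2
  split <;> [skip; simpa]
  split <;> simp [this]

lemma Fstar_le (hP : ∀ a b, 0 ≤ P a b) (k : Fin (s+1)) (z : Fin n × Fin n) :
    Fstar s P x k z ≤ P z.1 z.2 := by
  unfold Fstar
  have := hP z.1 z.2
  split
  · split <;> simp [this]
  · simp

lemma Fstar_sum_zero (hrow : ∀ a, ∑ b, P a b = 1) :
    ∑ z : Fin n × Fin n, Fstar s P x 0 z = 1 := by
  unfold Fstar
  rw [Fintype.sum_prod_type]
  simp [ite_mul, hrow x]

lemma Fstar_sum_ne (hrow : ∀ a, ∑ b, P a b = 1) (k : Fin (s+1)) (hk : k ≠ 0) :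
    ∑ z : Fin n × Fin n, Fstar s P x k z = n := by
  unfold Fstar
  rw [Fintype.sum_prod_type]
  simp [hk, hrow, card_univ]

lemma Fstar_sum_le (hP : ∀ a b, 0 ≤ P a b) (hrow : ∀ a, ∑ b, P a b = 1) (hn : 0 < n)
    (k : Fin (s+1)) : ∑ z : Fin n × Fin n, Fstar s P x k z ≤ n := by
  by_cases hk : k = 0
  · subst hk; rw [Fstar_sum_zero hrow]; exact_mod_cast hn
  · rw [Fstar_sum_ne hrow k hk]

lemma Fstar_sum_nonneg (hP : ∀ a b, 0 ≤ P a b) (k : Fin (s+1)) :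
    0 ≤ ∑ z : Fin n × Fin n, Fstar s P x k z :=
  Finset.sum_nonneg fun z _ => Fstar_nonneg hP k z

lemma starLaw_sum (ht : 1 ≤ s+1) (hP : ∀ a b, 0 ≤ P a b) (hrow : ∀ a, ∑ b, P a b = 1)
    (hn : 0 < n) : ∑ w : Fin (s+1) → Fin n × Fin n, starLaw (s+1) ht P x w = 1 := by
  simp_rw [star_eq ht]
  rw [← Finset.sum_mul, sum_pi_prod (Fstar s P x), Fin.prod_univ_succ, Fstar_sum_zero hrow]
  have : ∀ j : Fin s, ∑ z : Fin n × Fin n, Fstar s P x j.succ z = n :=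
    fun j => Fstar_sum_ne hrow _ (Fin.succ_ne_zero j)
  simp_rw [this]
  rw [Finset.prod_const, one_mul, card_univ, Fintype.card_fin, one_div, ← mul_pow]
  rw [mul_inv_cancel₀ (by exact_mod_cast hn.ne'), one_pow]

-- head computations
lemma compY (hrow : ∀ a, ∑ b, P a b = 1) (hcol : ∀ b, ∑ a, P a b = 1) :
    ∑ z : Fin n × Fin n, ∑ z' : Fin n × Fin n,
      (if z.2 = z'.2 then (1:ℝ) else 0) * (P z.1 z.2 * P z'.1 z'.2) = n := by
  rw [Fintype.sum_prod_type]
  have h1 : ∀ a b : Fin n, ∑ z' : Fin n × Fin n,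
      (if b = z'.2 then (1:ℝ) else 0) * (P a b * P z'.1 z'.2) = P a b := by
    intro a b
    rw [Fintype.sum_prod_type]
    have h2 : ∀ a' : Fin n, ∑ b' : Fin n,
        (if b = b' then (1:ℝ) else 0) * (P a b * P a' b') = P a b * P a' b := by
      intro a'; simp [ite_mul]
    simp_rw [h2, ← Finset.mul_sum, hcol b, mul_one]
  simp_rw [h1, hrow]
  simp [card_univ]

lemma compX (hrow : ∀ a, ∑ b, P a b = 1) :
    ∑ z : Fin n × Fin n, ∑ z' : Fin n × Fin n,
      (if z.1 = z'.1 then (1:ℝ) else 0) * (P z.1 z.2 * P z'.1 z'.2) = n := by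
  rw [Fintype.sum_prod_type]
  have h1 : ∀ a b : Fin n, ∑ z' : Fin n × Fin n,
      (if a = z'.1 then (1:ℝ) else 0) * (P a b * P z'.1 z'.2) = P a b := by
    intro a b
    rw [Fintype.sum_prod_type]
    have h2 : ∀ a' : Fin n, ∑ b' : Fin n,
        (if a = a' then (1:ℝ) else 0) * (P a b * P a' b')
          = (if a = a' then (1:ℝ) else 0) * P a b := by
      intro a'
      rw [← Finset.mul_sum, ← Finset.mul_sum, hrow a', mul_one]
    simp_rw [h2]
    simp [ite_mul]
  simp_rw [h1, hrow]
  simp [card_univ]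

lemma compY0 (hrow : ∀ a, ∑ b, P a b = 1) (hcol : ∀ b, ∑ a, P a b = 1) :
    ∑ z : Fin n × Fin n, ∑ z' : Fin n × Fin n,
      (if z.2 = z'.2 then (1:ℝ) else 0)
        * ((if z.1 = x then (1:ℝ) else 0) * P z.1 z.2 * P z'.1 z'.2) = 1 := by
  rw [Fintype.sum_prod_type]
  have h1 : ∀ a b : Fin n, ∑ z' : Fin n × Fin n,
      (if b = z'.2 then (1:ℝ) else 0)
        * ((if a = x then (1:ℝ) else 0) * P a b * P z'.1 z'.2)
      = (if a = x then (1:ℝ) else 0) * P a b := by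
    intro a b
    rw [Fintype.sum_prod_type]
    have h2 : ∀ a' : Fin n, ∑ b' : Fin n,
        (if b = b' then (1:ℝ) else 0) * ((if a = x then (1:ℝ) else 0) * P a b * P a' b')
        = (if a = x then (1:ℝ) else 0) * P a b * P a' b := by
      intro a'; simp [ite_mul]
    simp_rw [h2]
    rw [← Finset.mul_sum, hcol b, mul_one]
  simp_rw [h1]
  have h3 : ∀ a : Fin n, ∑ b : Fin n, (if a = x then (1:ℝ) else 0) * P a b
      = (if a = x then (1:ℝ) else 0) := by
    intro a; rw [← Finset.mul_sum, hrow a, mul_one]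
  simp_rw [h3]
  simp

lemma compY0' (hrow : ∀ a, ∑ b, P a b = 1) (hcol : ∀ b, ∑ a, P a b = 1) :
    ∑ z : Fin n × Fin n, ∑ z' : Fin n × Fin n,
      (if z.2 = z'.2 then (1:ℝ) else 0)
        * (P z.1 z.2 * ((if z'.1 = x then (1:ℝ) else 0) * P z'.1 z'.2)) = 1 := by
  rw [Fintype.sum_prod_type]
  have h1 : ∀ a b : Fin n, ∑ z' : Fin n × Fin n,
      (if b = z'.2 then (1:ℝ) else 0)
        * (P a b * ((if z'.1 = x then (1:ℝ) else 0) * P z'.1 z'.2))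
      = P a b * P x b := by
    intro a b
    rw [Fintype.sum_prod_type]
    have h2 : ∀ a' : Fin n, ∑ b' : Fin n,
        (if b = b' then (1:ℝ) else 0) * (P a b * ((if a' = x then (1:ℝ) else 0) * P a' b'))
        = (if a' = x then (1:ℝ) else 0) * (P a b * P a' b) := by
      intro a'; simp [ite_mul, mul_ite]
    simp_rw [h2]
    simp [ite_mul]
  simp_rw [h1]
  rw [Finset.sum_comm]
  have h4 : ∀ b : Fin n, ∑ a : Fin n, P a b * P x b = P x b := by
    intro b; rw [← Finset.sum_mul, hcol b, one_mul]
  simp_rw [h4, hrow x]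

lemma compX0 (hrow : ∀ a, ∑ b, P a b = 1) :
    ∑ z : Fin n × Fin n, ∑ z' : Fin n × Fin n,
      (if z.1 = z'.1 then (1:ℝ) else 0)
        * ((if z.1 = x then (1:ℝ) else 0) * P z.1 z.2 * P z'.1 z'.2) = 1 := by
  rw [Fintype.sum_prod_type]
  have h1 : ∀ a b : Fin n, ∑ z' : Fin n × Fin n,
      (if a = z'.1 then (1:ℝ) else 0)
        * ((if a = x then (1:ℝ) else 0) * P a b * P z'.1 z'.2)
      = (if a = x then (1:ℝ) else 0) * P a b := by
    intro a b
    rw [Fintype.sum_prod_type]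
    have h2 : ∀ a' : Fin n, ∑ b' : Fin n,
        (if a = a' then (1:ℝ) else 0) * ((if a = x then (1:ℝ) else 0) * P a b * P a' b')
        = (if a = a' then (1:ℝ) else 0) * ((if a = x then (1:ℝ) else 0) * P a b) := by
      intro a'
      rw [← Finset.mul_sum, ← Finset.mul_sum, hrow a', mul_one]
    simp_rw [h2]
    simp [ite_mul]
  simp_rw [h1]
  have h3 : ∀ a : Fin n, ∑ b : Fin n, (if a = x then (1:ℝ) else 0) * P a b
      = (if a = x then (1:ℝ) else 0) := by
    intro a; rw [← Finset.mul_sum, hrow a, mul_one]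
  simp_rw [h3]
  simp

lemma compX0' (hrow : ∀ a, ∑ b, P a b = 1) :
    ∑ z : Fin n × Fin n, ∑ z' : Fin n × Fin n,
      (if z.1 = z'.1 then (1:ℝ) else 0)
        * (P z.1 z.2 * ((if z'.1 = x then (1:ℝ) else 0) * P z'.1 z'.2)) = 1 := by
  rw [Fintype.sum_prod_type]
  have h1 : ∀ a b : Fin n, ∑ z' : Fin n × Fin n,
      (if a = z'.1 then (1:ℝ) else 0)
        * (P a b * ((if z'.1 = x then (1:ℝ) else 0) * P z'.1 z'.2))
      = (if a = x then (1:ℝ) else 0) * P a b := by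
    intro a b
    rw [Fintype.sum_prod_type]
    have h2 : ∀ a' : Fin n, ∑ b' : Fin n,
        (if a = a' then (1:ℝ) else 0) * (P a b * ((if a' = x then (1:ℝ) else 0) * P a' b'))
        = (if a = a' then (1:ℝ) else 0) * ((if a' = x then (1:ℝ) else 0) * P a b) := by
      intro a'
      simp_rw [← mul_assoc]
      rw [← Finset.mul_sum, hrow a', mul_one]
      ring
    simp_rw [h2]
    simp [ite_mul]
  simp_rw [h1]
  have h3 : ∀ a : Fin n, ∑ b : Fin n, (if a = x then (1:ℝ) else 0) * P a b
      = (if a = x then (1:ℝ) else 0) := by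
    intro a; rw [← Finset.mul_sum, hrow a, mul_one]
  simp_rw [h3]
  simp

lemma pair_le (hP : ∀ a b, 0 ≤ P a b) (hrow : ∀ a, ∑ b, P a b = 1) (hn : 0 < n)
    (j k : Fin (s+1)) (hjk : j ≠ k)
    (R : Fin n × Fin n → Fin n × Fin n → ℝ) (hR0 : ∀ z z', 0 ≤ R z z')
    (hA1 : j = 0 ∨ k = 0 → (∑ a, ∑ b, R a b * (Fstar s P x j a * Fstar s P x k b)) ≤ 1)
    (hA2 : (∑ a, ∑ b, R a b * (Fstar s P x j a * Fstar s P x k b)) ≤ n) :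
    ∑ w : Fin (s+1) → Fin n × Fin n, R (w j) (w k) * ∏ m, Fstar s P x m (w m)
      ≤ (n:ℝ) ^ s / n := by
  classical
  rw [sum_pi_two j k hjk]
  have hnR : (0:ℝ) < n := by exact_mod_cast hn
  have hAnn : 0 ≤ ∑ a, ∑ b, R a b * (Fstar s P x j a * Fstar s P x k b) :=
    Finset.sum_nonneg fun a _ => Finset.sum_nonneg fun b _ =>
      mul_nonneg (hR0 a b) (mul_nonneg (Fstar_nonneg hP j a) (Fstar_nonneg hP k b))
  have hkmem : k ∈ univ.erase j := by simp [hjk.symm, Ne.symm hjk]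
  have hcardE : ((univ.erase j).erase k).card = s - 1 := by
    rw [card_erase_of_mem hkmem, card_erase_of_mem (mem_univ j), card_univ, Fintype.card_fin]
    omega
  have hTnn : 0 ≤ ∏ m ∈ (univ.erase j).erase k, ∑ a, Fstar s P x m a :=
    Finset.prod_nonneg fun m _ => Fstar_sum_nonneg hP m
  have hs1 : 1 ≤ s := by
    rcases Nat.eq_zero_or_pos s with h|h
    · subst h
      exact absurd (Fin.ext (by omega : j.val = k.val)) hjk
    · exact h
  by_cases h0 : j = 0 ∨ k = 0
  · have hT : ∏ m ∈ (univ.erase j).erase k, ∑ a, Fstar s P x m a ≤ (n:ℝ)^(s-1) := by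
      calc ∏ m ∈ (univ.erase j).erase k, ∑ a, Fstar s P x m a
          ≤ ∏ _m ∈ (univ.erase j).erase k, (n:ℝ) :=
            Finset.prod_le_prod (fun m _ => Fstar_sum_nonneg hP m)
              (fun m _ => Fstar_sum_le hP hrow hn m)
        _ = (n:ℝ)^(s-1) := by rw [Finset.prod_const, hcardE]
    calc (∑ a, ∑ b, R a b * (Fstar s P x j a * Fstar s P x k b))
          * ∏ m ∈ (univ.erase j).erase k, ∑ a, Fstar s P x m a
        ≤ 1 * (n:ℝ)^(s-1) := mul_le_mul (hA1 h0) hT hTnn zero_le_one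
      _ ≤ (n:ℝ)^s / n := by
          rw [one_mul, le_div_iff₀ hnR, ← pow_succ]
          rw [Nat.sub_add_cancel hs1]
  · push_neg at h0
    have h0mem : (0 : Fin (s+1)) ∈ (univ.erase j).erase k := by
      simp [Ne.symm h0.1, Ne.symm h0.2]
    have hs2 : 2 ≤ s := by
      have h1 := j.isLt
      have h2 := k.isLt
      have h3 : j.val ≠ k.val := fun h => hjk (Fin.ext h)
      have h4 : j.val ≠ 0 := fun h => h0.1 (Fin.ext h)
      have h5 : k.val ≠ 0 := fun h => h0.2 (Fin.ext h)
      omega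
    have hT : ∏ m ∈ (univ.erase j).erase k, ∑ a, Fstar s P x m a ≤ (n:ℝ)^(s-2) := by
      rw [← Finset.mul_prod_erase _ _ h0mem, Fstar_sum_zero hrow, one_mul]
      calc ∏ m ∈ (((univ.erase j).erase k).erase 0), ∑ a, Fstar s P x m a
          ≤ ∏ _m ∈ (((univ.erase j).erase k).erase 0), (n:ℝ) :=
            Finset.prod_le_prod (fun m _ => Fstar_sum_nonneg hP m)
              (fun m _ => Fstar_sum_le hP hrow hn m)
        _ = (n:ℝ)^(s-2) := by
            rw [Finset.prod_const, card_erase_of_mem h0mem, hcardE]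
            norm_num [Nat.sub_sub]
    calc (∑ a, ∑ b, R a b * (Fstar s P x j a * Fstar s P x k b))
          * ∏ m ∈ (univ.erase j).erase k, ∑ a, Fstar s P x m a
        ≤ (n:ℝ) * (n:ℝ)^(s-2) := mul_le_mul hA2 hT hTnn hnR.le
      _ ≤ (n:ℝ)^s / n := by
          rw [le_div_iff₀ hnR, mul_assoc, ← pow_succ, ← pow_succ']
          have h9 : s - 2 + 1 + 1 = s := by omega
          rw [h9]

lemma prod_le_PP (hP : ∀ a b, 0 ≤ P a b) (j k : Fin (s+1)) :
    ∀ (R : Fin n × Fin n → Fin n × Fin n → ℝ), (∀ z z', 0 ≤ R z z') →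
    (∑ a : Fin n × Fin n, ∑ b : Fin n × Fin n, R a b * (Fstar s P x j a * Fstar s P x k b))
      ≤ ∑ a : Fin n × Fin n, ∑ b : Fin n × Fin n, R a b * (P a.1 a.2 * P b.1 b.2) := by
  intro R hR0
  refine Finset.sum_le_sum fun a _ => Finset.sum_le_sum fun b _ => ?_
  refine mul_le_mul_of_nonneg_left ?_ (hR0 a b)
  exact mul_le_mul (Fstar_le hP j a) (Fstar_le hP k b) (Fstar_nonneg hP k b) (hP a.1 a.2)

lemma pairY_le (ht : 1 ≤ s+1) (hP : ∀ a b, 0 ≤ P a b) (hrow : ∀ a, ∑ b, P a b = 1)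
    (hcol : ∀ b, ∑ a, P a b = 1) (hn : 0 < n) (j k : Fin (s+1)) (hjk : j ≠ k) :
    ∑ w : Fin (s+1) → Fin n × Fin n,
      (if (w j).2 = (w k).2 then (1:ℝ) else 0) * starLaw (s+1) ht P x w ≤ 1/n := by
  classical
  have hnR : (0:ℝ) < n := by exact_mod_cast hn
  simp_rw [star_eq ht, ← mul_assoc]
  rw [← Finset.sum_mul]
  have hmain := pair_le (x := x) hP hrow hn j k hjk
    (fun z z' => if z.2 = z'.2 then (1:ℝ) else 0)
    (fun z z' => by positivity)
    (by
      rintro (rfl | rfl)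
      · have hk0 : k ≠ 0 := Ne.symm hjk
        simp only [Fstar, if_pos rfl, if_neg hk0, one_mul]
        exact le_of_eq (compY0 (x := x) hrow hcol)
      · have hj0 : j ≠ 0 := hjk
        simp only [Fstar, if_pos rfl, if_neg hj0, one_mul]
        exact le_of_eq (compY0' (x := x) hrow hcol))
    (le_trans (prod_le_PP (x := x) hP j k _ (fun z z' => by positivity)) (le_of_eq (compY hrow hcol)))
  calc (∑ w : Fin (s+1) → Fin n × Fin n,
        (if (w j).2 = (w k).2 then (1:ℝ) else 0) * ∏ m, Fstar s P x m (w m)) * ((1:ℝ)/n)^s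
      ≤ ((n:ℝ)^s/n) * ((1:ℝ)/n)^s := by
        exact mul_le_mul_of_nonneg_right hmain (by positivity)
    _ = 1/n := by
        rw [div_mul_eq_mul_div, ← mul_pow, mul_one_div_cancel hnR.ne', one_pow]

lemma pairX_le (ht : 1 ≤ s+1) (hP : ∀ a b, 0 ≤ P a b) (hrow : ∀ a, ∑ b, P a b = 1)
    (hn : 0 < n) (j k : Fin (s+1)) (hjk : j ≠ k) :
    ∑ w : Fin (s+1) → Fin n × Fin n,
      (if (w j).1 = (w k).1 then (1:ℝ) else 0) * starLaw (s+1) ht P x w ≤ 1/n := by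
  classical
  have hnR : (0:ℝ) < n := by exact_mod_cast hn
  simp_rw [star_eq ht, ← mul_assoc]
  rw [← Finset.sum_mul]
  have hmain := pair_le (x := x) hP hrow hn j k hjk
    (fun z z' => if z.1 = z'.1 then (1:ℝ) else 0)
    (fun z z' => by positivity)
    (by
      rintro (rfl | rfl)
      · have hk0 : k ≠ 0 := Ne.symm hjk
        simp only [Fstar, if_pos rfl, if_neg hk0, one_mul]
        exact le_of_eq (compX0 (x := x) hrow)
      · have hj0 : j ≠ 0 := hjk
        simp only [Fstar, if_pos rfl, if_neg hj0, one_mul]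
        exact le_of_eq (compX0' (x := x) hrow))
    (le_trans (prod_le_PP (x := x) hP j k _ (fun z z' => by positivity)) (le_of_eq (compX hrow)))
  calc (∑ w : Fin (s+1) → Fin n × Fin n,
        (if (w j).1 = (w k).1 then (1:ℝ) else 0) * ∏ m, Fstar s P x m (w m)) * ((1:ℝ)/n)^s
      ≤ ((n:ℝ)^s/n) * ((1:ℝ)/n)^s := by
        exact mul_le_mul_of_nonneg_right hmain (by positivity)
    _ = 1/n := by
        rw [div_mul_eq_mul_div, ← mul_pow, mul_one_div_cancel hnR.ne', one_pow]

open Classical in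
lemma good_le {n s : ℕ} (ht : 1 ≤ s+1) (P : Matrix (Fin n) (Fin n) ℝ)
    (hP : ∀ a b, 0 ≤ P a b) (x : Fin n) (hn : 0 < n)
    (w : Fin (s+1) → Fin n × Fin n)
    (h0 : (w ⟨0, ht⟩).1 = x)
    (hY : ∀ j k : Fin (s+1), j ≠ k → (w j).2 ≠ (w k).2)
    (hX : ∀ j k : Fin (s+1), j ≠ k → (w j).1 ≠ (w k).1) :
    starLaw (s+1) ht P x w ≤ annealedLaw (s+1) ht P x w := by
  have hnR : (0:ℝ) < n := by exact_mod_cast hn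
  set f : Fin s → Fin n := fun j => (w j.castSucc).2 with hfdef
  set g : Fin s → Fin n := fun j => (w j.succ).1 with hgdef
  have hf : Function.Injective f := by
    intro a b hab
    by_contra hne
    exact hY a.castSucc b.castSucc (by simpa [Fin.castSucc_inj] using hne) hab
  have hg : Function.Injective g := by
    intro a b hab
    by_contra hne
    exact hX a.succ b.succ (by simpa [Fin.succ_inj] using hne) hab
  have hs_le : s ≤ n := by
    have := Fintype.card_le_of_injective f hf
    simpa using this
  set S := univ.filter (fun π : Equiv.Perm (Fin n) => ∀ j, π (f j) = g j) with hSdef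
  have hq : ∀ π, quenchedLaw (s+1) ht P x π w
      = if π ∈ S then ∏ k, P (w k).1 (w k).2 else 0 := by
    intro π
    rw [quenchedLaw]
    refine if_congr ?_ rfl rfl
    simp only [hSdef, mem_filter, mem_univ, true_and]
    constructor
    · rintro ⟨-, hsucc⟩ j
      exact (hsucc j (Nat.succ_lt_succ j.isLt)).symm
    · intro h
      refine ⟨h0, fun k hk => ?_⟩
      exact (h ⟨k, by omega⟩).symm
  have hsum : ∑ π : Equiv.Perm (Fin n), quenchedLaw (s+1) ht P x π w
      = (S.card : ℝ) * ∏ k, P (w k).1 (w k).2 := by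
    simp_rw [hq]
    rw [Finset.sum_ite_mem, Finset.univ_inter, Finset.sum_const, nsmul_eq_mul]
  have hcount : Nat.factorial (n - s) ≤ S.card := perm_extend_card f g hf hg
  have hprodnn : 0 ≤ ∏ k, P (w k).1 (w k).2 :=
    Finset.prod_nonneg fun k _ => hP _ _
  rw [annealedLaw, hsum, starLaw, if_pos h0]
  have hNcard : (Fintype.card (Equiv.Perm (Fin n)) : ℝ) = (Nat.factorial n : ℝ) := by
    rw [Fintype.card_perm, Fintype.card_fin]
  have hkey : ((1:ℝ)/n)^s ≤ (S.card : ℝ) / (Fintype.card (Equiv.Perm (Fin n))) := by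
    rw [hNcard, one_div, inv_pow, ← one_div]
    rw [div_le_div_iff₀ (by positivity) (by exact_mod_cast Nat.factorial_pos n)]
    have hnat : Nat.factorial n ≤ S.card * n ^ s := by
      calc Nat.factorial n = Nat.factorial (n - s) * Nat.descFactorial n s := by
            rw [Nat.factorial_mul_descFactorial hs_le]
        _ ≤ S.card * n ^ s :=
            Nat.mul_le_mul hcount (Nat.descFactorial_le_pow n s)
    calc (1:ℝ) * Nat.factorial n ≤ (S.card : ℝ) * (n:ℝ) ^ s := by
          rw [one_mul]
          exact_mod_cast hnat
      _ = _ := by ring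
  have hsimp : s + 1 - 1 = s := by omega
  rw [hsimp]
  calc (∏ k, P (w k).1 (w k).2) * ((1:ℝ)/n)^s
      ≤ (∏ k, P (w k).1 (w k).2) * ((S.card : ℝ) / (Fintype.card (Equiv.Perm (Fin n)))) :=
        mul_le_mul_of_nonneg_left hkey hprodnn
    _ = (S.card : ℝ) * (∏ k, P (w k).1 (w k).2) / (Fintype.card (Equiv.Perm (Fin n))) := by
        ring

end AuxiliaryLemmas

/-- coupling of Section 2.1: the total-variation distance between the
annealed law of the trajectory and the i.i.d. approximation is at most `2t²/n`. -/
theorem annealed_coupling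
    (n t : ℕ) (ht : 1 ≤ t) (P : Matrix (Fin n) (Fin n) ℝ) (hbis : Bistochastic P)
    (x : Fin n) :
    (1 / 2 : ℝ) * ∑ w : Fin t → Fin n × Fin n,
        |annealedLaw t ht P x w - starLaw t ht P x w| ≤ 2 * (t : ℝ) ^ 2 / n := by
  classical
  obtain ⟨hP, hrow, hcol⟩ := hbis
  have hn : 0 < n := x.pos
  have hnR : (0:ℝ) < n := by exact_mod_cast hn
  obtain ⟨s, rfl⟩ : ∃ s, t = s + 1 := ⟨t - 1, by omega⟩
  have hν0 : ∀ w, 0 ≤ starLaw (s+1) ht P x w := by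
    intro w
    rw [starLaw]
    split
    · exact mul_nonneg (Finset.prod_nonneg fun k _ => hP _ _) (by positivity)
    · exact le_refl 0
  have hq0 : ∀ (π : Equiv.Perm (Fin n)) w, 0 ≤ quenchedLaw (s+1) ht P x π w := by
    intro π w
    rw [quenchedLaw]
    split
    · exact Finset.prod_nonneg fun k _ => hP _ _
    · exact le_refl 0
  have hμ0 : ∀ w, 0 ≤ annealedLaw (s+1) ht P x w := by
    intro w
    exact div_nonneg (Finset.sum_nonneg fun π _ => hq0 π w) (by positivity)
  have hNpos : (0:ℝ) < (Fintype.card (Equiv.Perm (Fin n)) : ℝ) := by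
    exact_mod_cast Fintype.card_pos
  have hμsum : ∑ w : Fin (s+1) → Fin n × Fin n, annealedLaw (s+1) ht P x w = 1 := by
    simp_rw [annealedLaw]
    rw [← Finset.sum_div, Finset.sum_comm]
    simp_rw [quenched_sum ht P hrow x]
    rw [Finset.sum_const, nsmul_eq_mul, mul_one, card_univ]
    exact div_self hNpos.ne'
  have hνsum : ∑ w : Fin (s+1) → Fin n × Fin n, starLaw (s+1) ht P x w = 1 :=
    starLaw_sum (x := x) ht hP hrow hn
  have hhalf : (1/2 : ℝ) * ∑ w : Fin (s+1) → Fin n × Fin n,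
        |annealedLaw (s+1) ht P x w - starLaw (s+1) ht P x w|
      = ∑ w : Fin (s+1) → Fin n × Fin n,
          max (starLaw (s+1) ht P x w - annealedLaw (s+1) ht P x w) 0 := by
    have h1 : ∀ w : Fin (s+1) → Fin n × Fin n,
        |annealedLaw (s+1) ht P x w - starLaw (s+1) ht P x w|
        = (annealedLaw (s+1) ht P x w - starLaw (s+1) ht P x w)
          + 2 * max (starLaw (s+1) ht P x w - annealedLaw (s+1) ht P x w) 0 := by
      intro w
      rcases le_total (starLaw (s+1) ht P x w) (annealedLaw (s+1) ht P x w) with h | h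
      · rw [abs_of_nonneg (by linarith), max_eq_right (by linarith)]
        ring
      · rw [abs_of_nonpos (by linarith), max_eq_left (by linarith)]
        ring
    simp_rw [h1]
    rw [Finset.sum_add_distrib, Finset.sum_sub_distrib, hμsum, hνsum, ← Finset.mul_sum]
    ring
  rw [hhalf]
  have hpoint : ∀ w : Fin (s+1) → Fin n × Fin n,
      max (starLaw (s+1) ht P x w - annealedLaw (s+1) ht P x w) 0
      ≤ (∑ p ∈ (univ : Finset (Fin (s+1))).offDiag,
          ((if (w p.1).2 = (w p.2).2 then (1:ℝ) else 0)
            + (if (w p.1).1 = (w p.2).1 then (1:ℝ) else 0))) * starLaw (s+1) ht P x w := by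
    intro w
    have hBnn : 0 ≤ ∑ p ∈ (univ : Finset (Fin (s+1))).offDiag,
        ((if (w p.1).2 = (w p.2).2 then (1:ℝ) else 0)
          + (if (w p.1).1 = (w p.2).1 then (1:ℝ) else 0)) :=
      Finset.sum_nonneg fun p _ => by positivity
    by_cases hbad : (∃ j k : Fin (s+1), j ≠ k ∧ (w j).2 = (w k).2)
        ∨ (∃ j k : Fin (s+1), j ≠ k ∧ (w j).1 = (w k).1)
    · have hB1 : (1:ℝ) ≤ ∑ p ∈ (univ : Finset (Fin (s+1))).offDiag,
          ((if (w p.1).2 = (w p.2).2 then (1:ℝ) else 0)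
            + (if (w p.1).1 = (w p.2).1 then (1:ℝ) else 0)) := by
        obtain (⟨j,k,hjk,hc⟩ | ⟨j,k,hjk,hc⟩) := hbad
        · have hpmem : ((j,k) : Fin (s+1) × Fin (s+1)) ∈ (univ : Finset (Fin (s+1))).offDiag := by
            simp [Finset.mem_offDiag, hjk]
          refine le_trans ?_ (Finset.single_le_sum (fun p _ => by positivity) hpmem)
          simp [hc]
          positivity
        · have hpmem : ((j,k) : Fin (s+1) × Fin (s+1)) ∈ (univ : Finset (Fin (s+1))).offDiag := by
            simp [Finset.mem_offDiag, hjk]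
          refine le_trans ?_ (Finset.single_le_sum (fun p _ => by positivity) hpmem)
          have : (0:ℝ) ≤ (if (w j).2 = (w k).2 then (1:ℝ) else 0) := by positivity
          simp [hc]
          positivity
      refine max_le ?_ (mul_nonneg hBnn (hν0 w))
      calc starLaw (s+1) ht P x w - annealedLaw (s+1) ht P x w
          ≤ starLaw (s+1) ht P x w := by linarith [hμ0 w]
        _ = 1 * starLaw (s+1) ht P x w := (one_mul _).symm
        _ ≤ _ := mul_le_mul_of_nonneg_right hB1 (hν0 w)
    · push_neg at hbad
      obtain ⟨hY, hX⟩ := hbad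
      refine max_le ?_ (mul_nonneg hBnn (hν0 w))
      by_cases h0 : (w ⟨0, ht⟩).1 = x
      · have hle := good_le ht P hP x hn w h0 hY hX
        have h2 : starLaw (s+1) ht P x w - annealedLaw (s+1) ht P x w ≤ 0 := by linarith
        exact le_trans h2 (mul_nonneg hBnn (hν0 w))
      · have hz : starLaw (s+1) ht P x w = 0 := by rw [starLaw, if_neg h0]
        rw [hz, mul_zero]
        have := hμ0 w
        linarith
  calc ∑ w : Fin (s+1) → Fin n × Fin n,
        max (starLaw (s+1) ht P x w - annealedLaw (s+1) ht P x w) 0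
      ≤ ∑ w : Fin (s+1) → Fin n × Fin n,
          (∑ p ∈ (univ : Finset (Fin (s+1))).offDiag,
            ((if (w p.1).2 = (w p.2).2 then (1:ℝ) else 0)
              + (if (w p.1).1 = (w p.2).1 then (1:ℝ) else 0))) * starLaw (s+1) ht P x w :=
        Finset.sum_le_sum fun w _ => hpoint w
    _ = ∑ p ∈ (univ : Finset (Fin (s+1))).offDiag, ∑ w : Fin (s+1) → Fin n × Fin n,
          ((if (w p.1).2 = (w p.2).2 then (1:ℝ) else 0)
            + (if (w p.1).1 = (w p.2).1 then (1:ℝ) else 0)) * starLaw (s+1) ht P x w := by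
        simp_rw [Finset.sum_mul]
        rw [Finset.sum_comm]
    _ ≤ ∑ _p ∈ (univ : Finset (Fin (s+1))).offDiag, (1/n + 1/n : ℝ) := by
        refine Finset.sum_le_sum fun p hp => ?_
        have hjk : p.1 ≠ p.2 := (Finset.mem_offDiag.mp hp).2.2
        have hsplit : ∑ w : Fin (s+1) → Fin n × Fin n,
            ((if (w p.1).2 = (w p.2).2 then (1:ℝ) else 0)
              + (if (w p.1).1 = (w p.2).1 then (1:ℝ) else 0)) * starLaw (s+1) ht P x w
            = (∑ w : Fin (s+1) → Fin n × Fin n,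
                (if (w p.1).2 = (w p.2).2 then (1:ℝ) else 0) * starLaw (s+1) ht P x w)
              + ∑ w : Fin (s+1) → Fin n × Fin n,
                (if (w p.1).1 = (w p.2).1 then (1:ℝ) else 0) * starLaw (s+1) ht P x w := by
          rw [← Finset.sum_add_distrib]
          exact Finset.sum_congr rfl fun w _ => by ring
        rw [hsplit]
        exact add_le_add (pairY_le ht hP hrow hcol hn p.1 p.2 hjk)
          (pairX_le ht hP hrow hn p.1 p.2 hjk)
    _ ≤ 2 * ((s:ℝ)+1)^2 / n := by
        rw [Finset.sum_const, nsmul_eq_mul]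
        have hcard : ((univ : Finset (Fin (s+1))).offDiag.card : ℝ) ≤ ((s:ℝ)+1)^2 := by
          rw [Finset.offDiag_card, card_univ, Fintype.card_fin]
          have h9 : ((s+1) * (s+1) - (s+1) : ℕ) ≤ (s+1)*(s+1) := Nat.sub_le _ _
          calc (((s+1) * (s+1) - (s+1) : ℕ) : ℝ) ≤ (((s+1)*(s+1) : ℕ) : ℝ) := by
                exact_mod_cast h9
            _ = ((s:ℝ)+1)^2 := by push_cast; ring
        calc ((univ : Finset (Fin (s+1))).offDiag.card : ℝ) * (1/n + 1/n)
            ≤ ((s:ℝ)+1)^2 * (1/n + 1/n) := by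
              refine mul_le_mul_of_nonneg_right hcard (by positivity)
          _ = 2 * ((s:ℝ)+1)^2 / n := by ring
    _ = 2 * ((s+1 : ℕ) : ℝ)^2 / n := by push_cast; ring

end
end

section
/- Let $P$ be a bistochastic matrix on a finite state space $\Omega$ of size $n$ with minimal positive entry $\delta$ and laziness $\gamma > 0$ (i.e. $P(x,x) \ge \gamma$ for all $x$), let $\pi$ be a permutation of $\Omega$, and let $Q = P\Pi$. Then for every nonempty $S \subseteq \Omega$, $\varphi_S \ge \frac{\gamma^2\delta^2}{2|S|}\Big( \big|\pi^{-1}(\mathcal{E}(\pi(\mathcal{E}(S)))) \setminus S\big| + \big|\pi^{-1}(\mathcal{E}(\pi(\mathcal{E}(S^c)))) \setminus S^c\big| \Big)$, where $\varphi_S = \frac{1}{2|S|}\sum_{y\in\Omega} \min\big\{ \sum_{x\in S} Q^2(x,y),\ \sum_{x\in S^c} Q^2(x,y) \big\}$. -/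
open Finset Filter

noncomputable section

/-- The evolving-set quantity `φ_S` for the two-step chain `Q²`. -/
def phiSq {n : ℕ} (Q : Matrix (Fin n) (Fin n) ℝ) (S : Finset (Fin n)) : ℝ :=
  (1 / (2 * (S.card : ℝ))) *
    ∑ y, min (∑ x ∈ S, (Q ^ 2) x y) (∑ x ∈ Sᶜ, (Q ^ 2) x y)

open Classical in
/-- The set of states attainable by `P` in one step starting from `A`. -/
def attain {n : ℕ} (P : Matrix (Fin n) (Fin n) ℝ) (A : Finset (Fin n)) : Finset (Fin n) :=
  Finset.univ.filter fun y => ∃ x ∈ A, 0 < P x y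


/-- under laziness `γ`, for every nonempty `S`,
`φ_S ≥ (γ²δ²/(2|S|)) (|π⁻¹(ℰ(π(ℰ(S)))) \ S| + |π⁻¹(ℰ(π(ℰ(Sᶜ)))) \ Sᶜ|)`. -/
theorem phiS_lower_bound
    (n : ℕ) (P : Matrix (Fin n) (Fin n) ℝ) (hbis : Bistochastic P)
    (γ : ℝ) (hγ : 0 < γ) (hlazy : ∀ x, γ ≤ P x x)
    (π : Equiv.Perm (Fin n)) :
    ∀ S : Finset (Fin n), S.Nonempty →
      γ ^ 2 * (minPosEntry P) ^ 2 / (2 * (S.card : ℝ)) *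
          ((((attain P ((attain P S).image π)).image π.symm \ S).card : ℝ) +
            (((attain P ((attain P Sᶜ).image π)).image π.symm \ Sᶜ).card : ℝ)) ≤
        phiSq (P * permMatrix π) S := by
  classical
  intro S hS
  obtain ⟨hpos, hrow, hcol⟩ := hbis
  obtain ⟨x0, hx0⟩ := hS
  set Q := P * permMatrix π with hQdef
  set δ := minPosEntry P with hδdef
  -- basic facts about δ, γ
  have hset : {r : ℝ | 0 < r ∧ ∃ x y, P x y = r}.Finite := by
    apply Set.Finite.subset (Set.finite_range fun p : Fin n × Fin n => P p.1 p.2)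
    rintro r ⟨-, x, y, rfl⟩
    exact ⟨(x, y), rfl⟩
  have hne : {r : ℝ | 0 < r ∧ ∃ x y, P x y = r}.Nonempty :=
    ⟨P x0 x0, lt_of_lt_of_le hγ (hlazy x0), x0, x0, rfl⟩
  have hmem : δ ∈ {r : ℝ | 0 < r ∧ ∃ x y, P x y = r} := hne.csInf_mem hset
  have hδpos : 0 < δ := hmem.1
  have hδle : ∀ x y, 0 < P x y → δ ≤ P x y := fun x y h =>
    csInf_le hset.bddBelow ⟨h, x, y, rfl⟩
  have hentry_le_one : ∀ x y, P x y ≤ 1 := by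
    intro x y
    calc P x y ≤ ∑ y, P x y :=
          Finset.single_le_sum (fun i _ => hpos x i) (Finset.mem_univ y)
    _ = 1 := hrow x
  have hδ1 : δ ≤ 1 := by
    obtain ⟨-, a, b, hab⟩ := hmem
    rw [← hab]; exact hentry_le_one a b
  have hγ1 : γ ≤ 1 := le_trans (hlazy x0) (hentry_le_one x0 x0)
  -- Q entries
  have hQapp : ∀ x y, Q x y = P x (π.symm y) := by
    intro x y
    simp only [hQdef, Matrix.mul_apply, permMatrix]
    rw [Finset.sum_eq_single (π.symm y)]
    · simp
    · intro b _ hb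
      rw [if_neg, mul_zero]
      intro h; exact hb (by simp [h])
    · simp
  have hQnn : ∀ x y, 0 ≤ Q x y := fun x y => by rw [hQapp]; exact hpos _ _
  have hQ2 : ∀ x y, (Q ^ 2) x y = ∑ z, Q x z * Q z y := by
    intro x y; rw [pow_two, Matrix.mul_apply]
  have hQ2ge : ∀ x z y, Q x z * Q z y ≤ (Q ^ 2) x y := by
    intro x z y
    rw [hQ2]
    exact Finset.single_le_sum
      (fun i _ => mul_nonneg (hQnn x i) (hQnn i y)) (Finset.mem_univ z)
  have hQ2nn : ∀ x y, 0 ≤ (Q ^ 2) x y := fun x y =>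
    le_trans (mul_nonneg (hQnn x x) (hQnn x y)) (hQ2ge x x y)
  set f : Fin n → ℝ := fun y =>
    min (∑ x ∈ S, (Q ^ 2) x y) (∑ x ∈ Sᶜ, (Q ^ 2) x y) with hfdef
  have hfnn : ∀ y, 0 ≤ f y := fun y =>
    le_min (Finset.sum_nonneg fun i _ => hQ2nn i y)
      (Finset.sum_nonneg fun i _ => hQ2nn i y)
  -- key pointwise bound
  have key : ∀ (A : Finset (Fin n)) (y : Fin n),
      y ∈ (attain P ((attain P A).image π)).image π.symm \ A →
      γ ^ 2 * δ ^ 2 ≤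
        min (∑ x ∈ A, (Q ^ 2) x (π (π y))) (∑ x ∈ Aᶜ, (Q ^ 2) x (π (π y))) := by
    intro A y hy
    rw [Finset.mem_sdiff, Finset.mem_image] at hy
    obtain ⟨⟨a, ha, hay⟩, hyA⟩ := hy
    have hay' : a = π y := by rw [← hay]; simp
    subst hay'
    rw [attain, Finset.mem_filter] at ha
    obtain ⟨-, b, hb, hba⟩ := ha
    rw [Finset.mem_image] at hb
    obtain ⟨w, hw, rfl⟩ := hb
    rw [attain, Finset.mem_filter] at hw
    obtain ⟨-, x, hxA, hxw⟩ := hw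
    -- A side
    have h1 : δ * δ ≤ (Q ^ 2) x (π (π y)) := by
      refine le_trans ?_ (hQ2ge x (π w) (π (π y)))
      rw [hQapp, hQapp]
      simp only [Equiv.symm_apply_apply]
      exact mul_le_mul (hδle _ _ hxw) (hδle _ _ hba) hδpos.le
        (le_trans hδpos.le (hδle _ _ hxw))
    have hA : δ ^ 2 ≤ ∑ x ∈ A, (Q ^ 2) x (π (π y)) := by
      rw [pow_two]
      exact le_trans h1
        (Finset.single_le_sum (fun i _ => hQ2nn i (π (π y))) hxA)
    -- Aᶜ side
    have h2 : γ * γ ≤ (Q ^ 2) y (π (π y)) := by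
      refine le_trans ?_ (hQ2ge y (π y) (π (π y)))
      rw [hQapp, hQapp]
      simp only [Equiv.symm_apply_apply]
      exact mul_le_mul (hlazy y) (hlazy (π y)) hγ.le (le_trans hγ.le (hlazy y))
    have hAc : γ ^ 2 ≤ ∑ x ∈ Aᶜ, (Q ^ 2) x (π (π y)) := by
      rw [pow_two]
      exact le_trans h2
        (Finset.single_le_sum (fun i _ => hQ2nn i (π (π y)))
          (Finset.mem_compl.2 hyA))
    refine le_min (le_trans ?_ hA) (le_trans ?_ hAc)
    · have : γ ^ 2 ≤ 1 := by nlinarith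
      nlinarith [sq_nonneg δ]
    · have : δ ^ 2 ≤ 1 := by nlinarith
      nlinarith [sq_nonneg γ]
  set T := (attain P ((attain P S).image π)).image π.symm \ S with hT
  set T' := (attain P ((attain P Sᶜ).image π)).image π.symm \ Sᶜ with hT'
  have hTf : ∀ y ∈ T, γ ^ 2 * δ ^ 2 ≤ f (π (π y)) := fun y hy => key S y hy
  have hT'f : ∀ y ∈ T', γ ^ 2 * δ ^ 2 ≤ f (π (π y)) := by
    intro y hy
    have := key Sᶜ y hy
    rwa [compl_compl, min_comm] at this
  have hdisj : Disjoint T T' := by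
    rw [Finset.disjoint_left]
    intro a haT haT'
    exact (Finset.mem_sdiff.1 haT').2
      (Finset.mem_compl.2 (Finset.mem_sdiff.1 haT).2)
  have hginj : ∀ a ∈ T ∪ T', ∀ b ∈ T ∪ T', π (π a) = π (π b) → a = b :=
    fun a _ b _ h => π.injective (π.injective h)
  have hsum : γ ^ 2 * δ ^ 2 * ((T.card : ℝ) + T'.card) ≤ ∑ y, f y := by
    have h1 : ∑ y ∈ (T ∪ T').image (fun y => π (π y)), f y ≤ ∑ y, f y :=
      Finset.sum_le_sum_of_subset_of_nonneg (Finset.subset_univ _)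
        (fun i _ _ => hfnn i)
    rw [Finset.sum_image hginj, Finset.sum_union hdisj] at h1
    refine le_trans ?_ h1
    have e1 : (T.card : ℝ) * (γ ^ 2 * δ ^ 2) ≤ ∑ y ∈ T, f (π (π y)) := by
      have := Finset.card_nsmul_le_sum T (fun y => f (π (π y))) (γ ^ 2 * δ ^ 2) hTf
      rwa [nsmul_eq_mul] at this
    have e2 : (T'.card : ℝ) * (γ ^ 2 * δ ^ 2) ≤ ∑ y ∈ T', f (π (π y)) := by
      have := Finset.card_nsmul_le_sum T' (fun y => f (π (π y))) (γ ^ 2 * δ ^ 2) hT'f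
      rwa [nsmul_eq_mul] at this
    nlinarith [e1, e2]
  have hcard : (0 : ℝ) < (S.card : ℝ) := by
    exact_mod_cast Finset.card_pos.2 ⟨x0, hx0⟩
  rw [phiSq]
  have hrw : γ ^ 2 * δ ^ 2 / (2 * (S.card : ℝ)) * ((T.card : ℝ) + T'.card) =
      (1 / (2 * (S.card : ℝ))) * (γ ^ 2 * δ ^ 2 * ((T.card : ℝ) + T'.card)) := by
    ring
  rw [hrw]
  exact mul_le_mul_of_nonneg_left hsum (by positivity)


end
end

section
/- Let $P$ be a bistochastic matrix on a finite state space $\Omega$ of size $n$ with laziness $\gamma > 0$ (i.e. $P(x,x) \ge \gamma$ for all $x$), let $\pi$ be a permutation of $\Omega$, and let $Q = P\Pi$. Then for every $S \subseteq \Omega$, $\sum_{y \in \pi(\pi(S))} \min\Big\{ \sum_{x\in S} Q^2(x,y),\ \sum_{x\in S^c} Q^2(x,y) \Big\} \ \ge\ \gamma^2 \sum_{x\in S^c} Q^2\big(x, \pi(\pi(S))\big)$, where $Q^2(x, A) = \sum_{y \in A} Q^2(x,y)$. -/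
open Finset Filter

noncomputable section

/-- under laziness `γ`, for every `S ⊆ Ω`,
`∑_{y ∈ π(π(S))} min(∑_{x∈S} Q²(x,y), ∑_{x∈Sᶜ} Q²(x,y)) ≥ γ² Q²(Sᶜ, π(π(S)))`. -/
theorem min_sum_ge_gamma_sq
    (n : ℕ) (P : Matrix (Fin n) (Fin n) ℝ) (hbis : Bistochastic P)
    (γ : ℝ) (hγ : 0 < γ) (hlazy : ∀ x, γ ≤ P x x)
    (π : Equiv.Perm (Fin n)) (S : Finset (Fin n)) :
    γ ^ 2 * ∑ x ∈ Sᶜ, ∑ y ∈ (S.image π).image π,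
        ((P * permMatrix π) ^ 2) x y ≤
      ∑ y ∈ (S.image π).image π,
        min (∑ x ∈ S, ((P * permMatrix π) ^ 2) x y)
          (∑ x ∈ Sᶜ, ((P * permMatrix π) ^ 2) x y) := by
  classical
  obtain ⟨hpos, hrow, hcol⟩ := hbis
  set Q := P * permMatrix π with hQdef
  have hQ_apply : ∀ x z, Q x z = P x (π.symm z) := by
    intro x z
    rw [hQdef, Matrix.mul_apply, Finset.sum_eq_single (π.symm z)]
    · simp [permMatrix]
    · intro w _ hw
      have : z ≠ π w := fun h => hw (by simp [h])
      simp [permMatrix, this]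
    · simp
  have hQ2 : ∀ x y, (Q ^ 2) x y = ∑ z, Q x z * Q z y := by
    intro x y; rw [pow_two, Matrix.mul_apply]
  have hQnn : ∀ x y, 0 ≤ Q x y := fun x y => by
    rw [hQ_apply]; exact hpos _ _
  have hQ2nn : ∀ x y, 0 ≤ (Q ^ 2) x y := fun x y => by
    rw [hQ2]
    exact Finset.sum_nonneg fun z _ => mul_nonneg (hQnn _ _) (hQnn _ _)
  have hcolQ2 : ∀ y, ∑ x, (Q ^ 2) x y = 1 := by
    intro y
    have : ∑ x, (Q ^ 2) x y = ∑ z, (∑ x, Q x z) * Q z y := by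
      simp_rw [hQ2]
      rw [Finset.sum_comm]
      simp [Finset.sum_mul]
    rw [this]
    have hcolQ : ∀ z, ∑ x, Q x z = 1 := by
      intro z; simp_rw [hQ_apply]; exact hcol _
    simp_rw [hcolQ, one_mul, hQ_apply]
    exact hcol _
  -- swap the double sum on the LHS
  rw [show (∑ x ∈ Sᶜ, ∑ y ∈ (S.image π).image π, (Q ^ 2) x y) = ∑ y ∈ (S.image π).image π, ∑ x ∈ Sᶜ, (Q ^ 2) x y from Finset.sum_comm, Finset.mul_sum]
  apply Finset.sum_le_sum
  intro y hy
  -- y ∈ π(π(S))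
  obtain ⟨z, hz, hzy⟩ := Finset.mem_image.mp hy
  obtain ⟨s, hs, hsz⟩ := Finset.mem_image.mp hz
  have hx0 : π.symm (π.symm y) = s := by rw [← hzy, ← hsz]; simp
  have hγ1 : γ ≤ 1 := by
    calc γ ≤ P s s := hlazy s
    _ ≤ ∑ y, P s y := Finset.single_le_sum (fun i _ => hpos s i) (Finset.mem_univ s)
    _ = 1 := hrow s
  set A := ∑ x ∈ S, (Q ^ 2) x y with hA
  set B := ∑ x ∈ Sᶜ, (Q ^ 2) x y with hB
  have hBnn : 0 ≤ B := Finset.sum_nonneg fun x _ => hQ2nn x y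
  have hB1 : B ≤ 1 := by
    rw [← hcolQ2 y]
    exact Finset.sum_le_sum_of_subset_of_nonneg (Finset.subset_univ _)
      (fun x _ _ => hQ2nn x y)
  have hAγ : γ ^ 2 ≤ A := by
    have h1 : γ ^ 2 ≤ (Q ^ 2) s y := by
      rw [hQ2]
      calc γ ^ 2 = γ * γ := sq γ
      _ ≤ Q s (π.symm y) * Q (π.symm y) y := by
          apply mul_le_mul
          · rw [hQ_apply, hx0]; exact hlazy s
          · rw [hQ_apply]; exact hlazy _
          · exact le_of_lt hγ
          · exact hQnn _ _
      _ ≤ ∑ z, Q s z * Q z y :=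
          Finset.single_le_sum (f := fun z => Q s z * Q z y)
            (fun i _ => mul_nonneg (hQnn _ _) (hQnn _ _))
            (Finset.mem_univ (π.symm y))
    calc γ ^ 2 ≤ (Q ^ 2) s y := h1
    _ ≤ A := Finset.single_le_sum (fun i _ => hQ2nn i y) hs
  refine le_min ?_ ?_
  · nlinarith
  · have hγ2 : γ ^ 2 ≤ 1 := by nlinarith
    nlinarith

end
end
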